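/- For every p ∈ [0, 3/4), the probability that some point of [0,1]^2 is not covered by any available dyadic tile of order n tends to 1 as n → ∞; consequently lim_{n→∞} T_n(p) = 0, and hence p_c ≥ 3/4. -/

import Mathlib

open Set Filter Topology

noncomputable section

/-- The dyadic tile `[a/2^i, (a+1)/2^i] × [b/2^j, (b+1)/2^j]` as a subset of `ℝ × ℝ`. -/
def dyadicTile (i j a b : ℕ) : Set (ℝ × ℝ) :=
  Set.Icc ((a : ℝ) / 2 ^ i) (((a : ℝ) + 1) / 2 ^ i) ×ˢ
    Set.Icc ((b : ℝ) / 2 ^ j) (((b : ℝ) + 1) / 2 ^ j)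

/-- `t` is a dyadic tile of order `n` contained in the unit square. -/
def IsDyadicTile (n : ℕ) (t : Set (ℝ × ℝ)) : Prop :=
  ∃ i j a b : ℕ, i + j = n ∧ a < 2 ^ i ∧ b < 2 ^ j ∧ t = dyadicTile i j a b

/-- `F` is a tiling of the region `R` by dyadic tiles of order `n`:
a set of order-`n` tiles whose union is `R` and whose interiors are pairwise disjoint. -/
def IsTiling (n : ℕ) (F : Set (Set (ℝ × ℝ))) (R : Set (ℝ × ℝ)) : Prop :=
  (∀ t ∈ F, IsDyadicTile n t) ∧ ⋃₀ F = R ∧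
    F.Pairwise fun s t => interior s ∩ interior t = ∅

def unitSquare : Set (ℝ × ℝ) := Set.Icc (0 : ℝ) 1 ×ˢ Set.Icc (0 : ℝ) 1

/-- Index type for the dyadic tiles of order `n`: a shape `i` (width `2^{-i}`, height
`2^{-(n-i)}`) together with the horizontal and vertical positions. -/
abbrev TileIndex (n : ℕ) : Type :=
  Σ i : Fin (n + 1), Fin (2 ^ (i : ℕ)) × Fin (2 ^ (n - (i : ℕ)))

/-- The order-`n` tile corresponding to an index. -/
def tileOf (n : ℕ) (x : TileIndex n) : Set (ℝ × ℝ) :=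
  dyadicTile (x.1 : ℕ) (n - (x.1 : ℕ)) (x.2.1 : ℕ) (x.2.2 : ℕ)

/-- The set `S` of available order-`n` tiles admits a tiling of the unit square. -/
def TileableSquare (n : ℕ) (S : Finset (TileIndex n)) : Prop :=
  ∃ F : Set (Set (ℝ × ℝ)), (∀ t ∈ F, ∃ x ∈ S, t = tileOf n x) ∧ IsTiling n F unitSquare

open Classical in
/-- Probability of the event `E` when each of the `(n+1)·2^n` order-`n` dyadic tiles is
available independently with probability `p`. -/
def Pr (n : ℕ) (p : ℝ) (E : Finset (TileIndex n) → Prop) : ℝ :=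
  ∑ S : Finset (TileIndex n),
    if E S then p ^ S.card * (1 - p) ^ ((n + 1) * 2 ^ n - S.card) else 0

/-- `T n p`: the probability that some set of available order-`n` tiles tiles `[0,1]²`. -/
def T (n : ℕ) (p : ℝ) : ℝ := Pr n p (TileableSquare n)

/-- The critical probability `p_c`. -/
def pc : ℝ :=
  sInf {p : ℝ | p ∈ Set.Icc (0 : ℝ) 1 ∧ Tendsto (fun n => T n p) atTop (𝓝 1)}


/-- The event that some point of the unit square is covered by no available tile. -/
def UncoveredExists (n : ℕ) (S : Finset (TileIndex n)) : Prop :=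
  ∃ x ∈ unitSquare, ∀ i ∈ S, x ∉ tileOf n i


-- ### Auxiliary development ###
section aux
open Finset

lemma card_tileIndex (n : ℕ) : Fintype.card (TileIndex n) = (n + 1) * 2 ^ n := by
  rw [Fintype.card_sigma]
  have : ∀ i : Fin (n+1), Fintype.card (Fin (2 ^ (i:ℕ)) × Fin (2 ^ (n - (i:ℕ)))) = 2 ^ n := by
    intro i
    rw [Fintype.card_prod, Fintype.card_fin, Fintype.card_fin, ← pow_add]
    congr 1
    omega
  simp only [this, Finset.sum_const, Finset.card_univ, Fintype.card_fin, smul_eq_mul]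

/-- binomial identity -/
lemma binom_sum {ι : Type*} [DecidableEq ι] (p q : ℝ) (s : Finset ι) :
    ∑ t ∈ s.powerset, p ^ t.card * q ^ (s.card - t.card) = (p + q) ^ s.card := by
  rw [← Finset.prod_const, Finset.prod_add]
  refine Finset.sum_congr rfl fun t ht => ?_
  rw [Finset.prod_const, Finset.prod_const, Finset.card_sdiff_of_subset (Finset.mem_powerset.1 ht)]

lemma sum_weight (n : ℕ) (p : ℝ) :
    ∑ S : Finset (TileIndex n), p ^ S.card * (1 - p) ^ ((n + 1) * 2 ^ n - S.card) = 1 := by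
  classical
  have h := binom_sum p (1 - p) (Finset.univ : Finset (TileIndex n))
  rw [← Finset.powerset_univ]
  rw [Finset.card_univ, card_tileIndex] at h
  simpa using h

lemma weight_nonneg {n : ℕ} {p : ℝ} (hp0 : 0 ≤ p) (hp1 : p ≤ 1) (S : Finset (TileIndex n)) :
    0 ≤ p ^ S.card * (1 - p) ^ ((n + 1) * 2 ^ n - S.card) := by
  have : (0:ℝ) ≤ 1 - p := by linarith
  positivity

lemma Pr_nonneg {n : ℕ} {p : ℝ} (hp0 : 0 ≤ p) (hp1 : p ≤ 1) (E : Finset (TileIndex n) → Prop) :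
    0 ≤ Pr n p E := by
  classical
  refine Finset.sum_nonneg fun S _ => ?_
  split
  · exact weight_nonneg hp0 hp1 S
  · exact le_refl 0


variable {n : ℕ} {p : ℝ}

lemma Pr_def (E : Finset (TileIndex n) → Prop) [DecidablePred E] :
    Pr n p E = ∑ S : Finset (TileIndex n),
      if E S then p ^ S.card * (1 - p) ^ ((n + 1) * 2 ^ n - S.card) else 0 := by
  rw [Pr]
  exact Finset.sum_congr rfl fun S _ => by by_cases h : E S <;> simp [h]

lemma Pr_mono (hp0 : 0 ≤ p) (hp1 : p ≤ 1) {E F : Finset (TileIndex n) → Prop}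
    (h : ∀ S, E S → F S) : Pr n p E ≤ Pr n p F := by
  classical
  refine Finset.sum_le_sum fun S _ => ?_
  by_cases hE : E S
  · simp only [if_pos hE, if_pos (h S hE)]; exact le_refl _
  · simp only [if_neg hE]
    split
    · exact weight_nonneg hp0 hp1 S
    · exact le_refl _

lemma Pr_add_compl (hp0 : 0 ≤ p) (hp1 : p ≤ 1) (E : Finset (TileIndex n) → Prop) :
    Pr n p E + Pr n p (fun S => ¬ E S) = 1 := by
  classical
  rw [Pr, Pr, ← Finset.sum_add_distrib]
  conv_rhs => rw [← sum_weight n p]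
  refine Finset.sum_congr rfl fun S _ => ?_
  by_cases hE : E S <;> simp [hE]

lemma Pr_le_one (hp0 : 0 ≤ p) (hp1 : p ≤ 1) (E : Finset (TileIndex n) → Prop) :
    Pr n p E ≤ 1 := by
  classical
  conv_rhs => rw [← sum_weight n p]
  rw [Pr]
  refine Finset.sum_le_sum fun S _ => ?_
  split
  · exact le_refl _
  · exact weight_nonneg hp0 hp1 S

lemma Pr_disjoint (hp0 : 0 ≤ p) (hp1 : p ≤ 1) (A : Finset (TileIndex n)) :
    Pr n p (fun S => Disjoint A S) = (1 - p) ^ A.card := by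
  classical
  rw [Pr_def]
  have hvan : ∀ S ∈ (Finset.univ : Finset (Finset (TileIndex n))), S ∉ Aᶜ.powerset →
      (if Disjoint A S then p ^ S.card * (1 - p) ^ ((n + 1) * 2 ^ n - S.card) else 0) = 0 := by
    intro S _ hS
    rw [if_neg]
    intro hdisj
    exact hS (Finset.mem_powerset.2 fun x hx => Finset.mem_compl.2 fun hA =>
      (Finset.disjoint_right.1 hdisj hx) hA)
  rw [← Finset.sum_subset (Finset.subset_univ (Aᶜ.powerset)) hvan]
  have hcard : ∀ S ∈ Aᶜ.powerset,
      (if Disjoint A S then p ^ S.card * (1 - p) ^ ((n + 1) * 2 ^ n - S.card) else 0)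
      = (1-p) ^ A.card * (p ^ S.card * (1-p) ^ (Aᶜ.card - S.card)) := by
    intro S hS
    have hS' : S ⊆ Aᶜ := Finset.mem_powerset.1 hS
    rw [if_pos]
    · have h1 : S.card ≤ Aᶜ.card := Finset.card_le_card hS'
      have h2 : Aᶜ.card = (n+1) * 2^n - A.card := by
        rw [Finset.card_compl, card_tileIndex]
      have h3 : A.card ≤ (n+1) * 2^n := by
        rw [← card_tileIndex n, ← Finset.card_univ]
        exact Finset.card_le_card (Finset.subset_univ _)
      have : (n+1) * 2^n - S.card = A.card + (Aᶜ.card - S.card) := by omega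
      rw [this, pow_add]; ring
    · exact Finset.disjoint_left.2 fun x hxA hxS => Finset.mem_compl.1 (hS' hxS) hxA
  rw [Finset.sum_congr rfl hcard, ← Finset.mul_sum]
  rw [binom_sum p (1-p) Aᶜ]
  simp

/-- The tile of shape `i` containing the center of small square `(u,v)`. -/
def tileAt (n : ℕ) (u v : Fin (2 ^ n)) (i : Fin (n + 1)) : TileIndex n :=
  ⟨i, ⟨⟨(u : ℕ) / 2 ^ (n - (i : ℕ)), by
      have hu := u.2
      have hi : (i : ℕ) ≤ n := Nat.lt_succ_iff.1 i.2
      rw [Nat.div_lt_iff_lt_mul (Nat.two_pow_pos _)]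
      calc (u:ℕ) < 2 ^ n := hu
        _ = 2 ^ (i:ℕ) * 2 ^ (n - (i:ℕ)) := by rw [← pow_add]; congr 1; omega⟩,
    ⟨(v : ℕ) / 2 ^ (i : ℕ), by
      have hv := v.2
      have hi : (i : ℕ) ≤ n := Nat.lt_succ_iff.1 i.2
      rw [Nat.div_lt_iff_lt_mul (Nat.two_pow_pos _)]
      calc (v:ℕ) < 2 ^ n := hv
        _ = 2 ^ (n - (i:ℕ)) * 2 ^ (i:ℕ) := by rw [← pow_add]; congr 1; omega⟩⟩⟩

def tset (n : ℕ) (u v : Fin (2 ^ n)) : Finset (TileIndex n) :=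
  Finset.image (tileAt n u v) Finset.univ

lemma tileAt_injective (n : ℕ) (u v : Fin (2 ^ n)) : Function.Injective (tileAt n u v) :=
  fun i j h => congrArg Sigma.fst h

lemma card_tset (n : ℕ) (u v : Fin (2 ^ n)) : (tset n u v).card = n + 1 := by
  rw [tset, Finset.card_image_of_injective _ (tileAt_injective n u v)]
  simp

/-- center of the small square (u,v) -/
def ctr (n : ℕ) (u v : Fin (2 ^ n)) : ℝ × ℝ :=
  ((2 * (u:ℝ) + 1) / 2 ^ (n + 1), (2 * (v:ℝ) + 1) / 2 ^ (n + 1))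

lemma ctr_mem_unitSquare (n : ℕ) (u v : Fin (2 ^ n)) : ctr n u v ∈ unitSquare := by
  have h2 : (0:ℝ) < 2 ^ (n+1) := by positivity
  have key : ∀ w : Fin (2 ^ n), (2 * (w:ℝ) + 1) / 2 ^ (n + 1) ∈ Set.Icc (0:ℝ) 1 := by
    intro w
    constructor
    · positivity
    · rw [div_le_one h2]
      have : ((w:ℕ):ℝ) ≤ (2:ℝ) ^ n - 1 := by
        have := w.2
        have : ((w:ℕ):ℝ) ≤ (2:ℝ)^n - 1 := by
          have h := Nat.lt_iff_add_one_le.1 w.2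
          have : ((w:ℕ):ℝ) + 1 ≤ ((2^n : ℕ):ℝ) := by exact_mod_cast h
          push_cast at this ⊢
          linarith
        exact this
      push_cast
      rw [pow_succ]
      linarith
  exact ⟨key u, key v⟩

/-- division characterization from real interval membership -/
lemma div_eq_of_center_mem {n i a u : ℕ} (hi : i ≤ n)
    (h1 : (a : ℝ) / 2 ^ i ≤ (2 * (u:ℝ) + 1) / 2 ^ (n + 1))
    (h2 : (2 * (u:ℝ) + 1) / 2 ^ (n + 1) ≤ ((a : ℝ) + 1) / 2 ^ i) :
    u / 2 ^ (n - i) = a := by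
  have hpi : (0:ℝ) < 2 ^ i := by positivity
  have hpn : (0:ℝ) < 2 ^ (n+1) := by positivity
  rw [div_le_div_iff₀ hpi hpn] at h1
  rw [div_le_div_iff₀ hpn hpi] at h2
  -- h1 : a * 2^(n+1) ≤ (2u+1) * 2^i ; h2 : (2u+1) * 2^i ≤ (a+1) * 2^(n+1)
  have hsplit : (2:ℝ) ^ (n+1) = 2 ^ (n + 1 - i) * 2 ^ i := by
    rw [← pow_add]; congr 1; omega
  rw [hsplit, ← mul_assoc] at h1 h2
  have h1' : (a:ℝ) * 2 ^ (n+1-i) ≤ 2 * u + 1 := le_of_mul_le_mul_right h1 hpi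
  have h2' : 2 * (u:ℝ) + 1 ≤ ((a:ℝ)+1) * 2 ^ (n+1-i) := le_of_mul_le_mul_right h2 hpi
  have h1n : a * 2 ^ (n+1-i) ≤ 2 * u + 1 := by exact_mod_cast h1'
  have h2n : 2 * u + 1 ≤ (a+1) * 2 ^ (n+1-i) := by exact_mod_cast h2'
  have hpow : 2 ^ (n+1-i) = 2 * 2 ^ (n-i) := by
    rw [← pow_succ']; congr 1; omega
  rw [hpow] at h1n h2n
  have e1 : 2 * (a * 2 ^ (n-i)) ≤ 2 * u + 1 := by ring_nf; ring_nf at h1n; omega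
  have e2 : 2 * u + 1 ≤ 2 * ((a+1) * 2 ^ (n-i)) := by ring_nf; ring_nf at h2n; omega
  exact Nat.div_eq_of_lt_le (by omega) (by omega)

lemma mem_tset_of_ctr_mem {n : ℕ} {u v : Fin (2 ^ n)} {x : TileIndex n}
    (h : ctr n u v ∈ tileOf n x) : x ∈ tset n u v := by
  obtain ⟨i, a, b⟩ := x
  have hi : (i : ℕ) ≤ n := Nat.lt_succ_iff.1 i.2
  obtain ⟨⟨h1, h2⟩, ⟨h3, h4⟩⟩ := h
  have ha : (u : ℕ) / 2 ^ (n - (i:ℕ)) = (a : ℕ) := div_eq_of_center_mem hi h1 h2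
  have hb : (v : ℕ) / 2 ^ (i : ℕ) = (b : ℕ) := by
    have hni : n - (n - (i:ℕ)) = (i:ℕ) := by omega
    have := div_eq_of_center_mem (i := n - (i:ℕ)) (a := (b:ℕ)) (u := (v:ℕ))
      (by omega) h3 h4
    rwa [hni] at this
  have : tileAt n u v i = ⟨i, a, b⟩ := by
    rw [tileAt]
    congr 1
    · ext
      · simp [ha]
      · simp [hb]
  rw [tset, Finset.mem_image]
  exact ⟨i, Finset.mem_univ i, this⟩

lemma div_agree_mono {u u' k K : ℕ} (h : u / 2 ^ k = u' / 2 ^ k) (hkK : k ≤ K) :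
    u / 2 ^ K = u' / 2 ^ K := by
  have : (2:ℕ) ^ K = 2 ^ k * 2 ^ (K - k) := by rw [← pow_add]; congr 1; omega
  rw [this, ← Nat.div_div_eq_div_mul, ← Nat.div_div_eq_div_mul, h]

open Classical in
/-- the set of shapes where the two tile families agree -/
def good (n : ℕ) (u v u' v' : Fin (2 ^ n)) : Finset (Fin (n + 1)) :=
  Finset.univ.filter fun i : Fin (n+1) =>
    (u:ℕ) / 2 ^ (n - (i:ℕ)) = (u':ℕ) / 2 ^ (n - (i:ℕ)) ∧ (v:ℕ) / 2 ^ (i:ℕ) = (v':ℕ) / 2 ^ (i:ℕ)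

lemma card_inter_le_card_good (n : ℕ) (u v u' v' : Fin (2 ^ n)) :
    (tset n u v ∩ tset n u' v').card ≤ (good n u v u' v').card := by
  classical
  refine Finset.card_le_card_of_injOn (fun x => x.1) ?_ ?_
  · rintro x hx
    rw [Finset.mem_coe, Finset.mem_inter] at hx
    obtain ⟨hx1, hx2⟩ := hx
    rw [tset, Finset.mem_image] at hx1 hx2
    obtain ⟨i, _, hi⟩ := hx1
    obtain ⟨i', _, hi'⟩ := hx2
    have hii' : i = i' := by
      have := congrArg Sigma.fst (hi.trans hi'.symm)
      simpa [tileAt] using this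
    subst hii'
    have h1 : x.1 = i := by rw [← hi]; rfl
    rw [Finset.mem_coe, good, Finset.mem_filter]
    refine ⟨Finset.mem_univ _, ?_⟩
    simp only [h1]
    have heq : tileAt n u v i = tileAt n u' v' i := hi.trans hi'.symm
    rw [tileAt, tileAt] at heq
    have h2 := (Sigma.mk.inj_iff.1 heq).2
    rw [heq_iff_eq, Prod.mk.injEq] at h2
    exact ⟨congrArg Fin.val h2.1, congrArg Fin.val h2.2⟩
  · rintro x hx y hy hxy
    rw [Finset.mem_coe, Finset.mem_inter] at hx hy
    obtain ⟨hx1, -⟩ := hx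
    obtain ⟨hy1, -⟩ := hy
    rw [tset, Finset.mem_image] at hx1 hy1
    obtain ⟨i, -, hi⟩ := hx1
    obtain ⟨j, -, hj⟩ := hy1
    have : i = j := by
      have h1 : x.1 = i := by rw [← hi]; rfl
      have h2 : y.1 = j := by rw [← hj]; rfl
      rw [← h1, ← h2]; exact hxy
    rw [← hi, ← hj, this]

/-- if the good set has at least `m ≥ 1` elements, there is a "window" -/
lemma exists_window {n : ℕ} {u v u' v' : Fin (2 ^ n)} {m : ℕ} (hm1 : 1 ≤ m)
    (h : m ≤ (good n u v u' v').card) :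
    ∃ i0 : ℕ, i0 + m ≤ n + 1 ∧
      (u:ℕ) / 2 ^ (n + 1 - m - i0) = (u':ℕ) / 2 ^ (n + 1 - m - i0) ∧
      (v:ℕ) / 2 ^ i0 = (v':ℕ) / 2 ^ i0 := by
  classical
  set G : Finset ℕ := (good n u v u' v').image Fin.val with hG
  have hcardG : G.card = (good n u v u' v').card :=
    Finset.card_image_of_injective _ Fin.val_injective
  have hne : G.Nonempty := by
    rw [← Finset.card_pos, hcardG]; omega
  set j0 := G.min' hne
  set j1 := G.max' hne
  have hj0G : j0 ∈ G := G.min'_mem hne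
  have hj1G : j1 ∈ G := G.max'_mem hne
  have hsub : G ⊆ Finset.Icc j0 j1 := fun x hx =>
    Finset.mem_Icc.2 ⟨G.min'_le x hx, G.le_max' x hx⟩
  have hcard_le : G.card ≤ j1 - j0 + 1 := by
    have := Finset.card_le_card hsub
    rw [Nat.card_Icc] at this
    omega
  have hmem : ∀ j ∈ G, j ≤ n ∧
      ((u:ℕ) / 2 ^ (n - j) = (u':ℕ) / 2 ^ (n - j) ∧ (v:ℕ) / 2 ^ j = (v':ℕ) / 2 ^ j) := by
    intro j hj
    rw [hG, Finset.mem_image] at hj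
    obtain ⟨i, hi, rfl⟩ := hj
    rw [good, Finset.mem_filter] at hi
    exact ⟨Nat.lt_succ_iff.1 i.2, hi.2⟩
  obtain ⟨hj0n, -, hv0⟩ := hmem j0 hj0G
  obtain ⟨hj1n, hu1, -⟩ := hmem j1 hj1G
  have hj01 : j0 ≤ j1 := G.min'_le j1 hj1G
  have hwin : j0 + m ≤ j1 + 1 := by omega
  refine ⟨j0, by omega, ?_, hv0⟩
  exact div_agree_mono hu1 (by omega)

/-- counting pairs that agree at level k -/
lemma card_samediv (n k : ℕ) (hk : k ≤ n) :
    ((Finset.univ : Finset (Fin (2^n) × Fin (2^n))).filter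
      (fun uu => (uu.1:ℕ) / 2 ^ k = (uu.2:ℕ) / 2 ^ k)).card ≤ 2 ^ (n + k) := by
  classical
  have hmap : ∀ uu ∈ (Finset.univ : Finset (Fin (2^n) × Fin (2^n))).filter
      (fun uu => (uu.1:ℕ) / 2 ^ k = (uu.2:ℕ) / 2 ^ k),
      (⟨uu.1, ⟨(uu.2:ℕ) % 2 ^ k, Nat.mod_lt _ (Nat.two_pow_pos _)⟩⟩ :
        Fin (2^n) × Fin (2^k)) ∈ (Finset.univ : Finset (Fin (2^n) × Fin (2^k))) :=
    fun _ _ => Finset.mem_univ _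
  have hinj : ∀ uu ∈ (Finset.univ : Finset (Fin (2^n) × Fin (2^n))).filter
      (fun uu => (uu.1:ℕ) / 2 ^ k = (uu.2:ℕ) / 2 ^ k),
      ∀ ww ∈ (Finset.univ : Finset (Fin (2^n) × Fin (2^n))).filter
      (fun uu => (uu.1:ℕ) / 2 ^ k = (uu.2:ℕ) / 2 ^ k),
      (⟨uu.1, ⟨(uu.2:ℕ) % 2 ^ k, Nat.mod_lt _ (Nat.two_pow_pos _)⟩⟩ :
        Fin (2^n) × Fin (2^k)) = ⟨ww.1, ⟨(ww.2:ℕ) % 2 ^ k, Nat.mod_lt _ (Nat.two_pow_pos _)⟩⟩ → uu = ww := by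
    intro uu huu ww hww heq
    rw [Finset.mem_filter] at huu hww
    rw [Prod.mk.injEq] at heq
    obtain ⟨h1, h2⟩ := heq
    have h2' : (uu.2:ℕ) % 2 ^ k = (ww.2:ℕ) % 2 ^ k := congrArg Fin.val h2
    have hdiv : (uu.2:ℕ) / 2 ^ k = (ww.2:ℕ) / 2 ^ k := by
      rw [← huu.2, ← hww.2, h1]
    have : (uu.2:ℕ) = (ww.2:ℕ) := by
      conv_lhs => rw [← Nat.div_add_mod (uu.2:ℕ) (2^k)]
      conv_rhs => rw [← Nat.div_add_mod (ww.2:ℕ) (2^k)]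
      rw [hdiv, h2']
    exact Prod.ext h1 (Fin.val_injective this)
  have := Finset.card_le_card_of_injOn _ hmap (fun a ha b hb => hinj a ha b hb)
  calc _ ≤ (Finset.univ : Finset (Fin (2^n) × Fin (2^k))).card := this
    _ = 2 ^ n * 2 ^ k := by simp
    _ = 2 ^ (n + k) := by rw [pow_add]

abbrev SP (n : ℕ) := (Fin (2^n) × Fin (2^n)) × (Fin (2^n) × Fin (2^n))

open Classical in
lemma card_pairs_event (n i0 k : ℕ) (hk : k ≤ n) (hi0 : i0 ≤ n) :
    ((Finset.univ : Finset (SP n)).filter fun st =>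
        ((st.1.1:ℕ) / 2 ^ k = (st.2.1:ℕ) / 2 ^ k ∧
         (st.1.2:ℕ) / 2 ^ i0 = (st.2.2:ℕ) / 2 ^ i0)).card ≤ 2 ^ (n + k) * 2 ^ (n + i0) := by
  classical
  set FU := (Finset.univ : Finset (Fin (2^n) × Fin (2^n))).filter
      (fun uu => (uu.1:ℕ) / 2 ^ k = (uu.2:ℕ) / 2 ^ k) with hFU
  set FV := (Finset.univ : Finset (Fin (2^n) × Fin (2^n))).filter
      (fun uu => (uu.1:ℕ) / 2 ^ i0 = (uu.2:ℕ) / 2 ^ i0) with hFV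
  have hmap : ∀ st ∈ (Finset.univ : Finset (SP n)).filter (fun st =>
        ((st.1.1:ℕ) / 2 ^ k = (st.2.1:ℕ) / 2 ^ k ∧
         (st.1.2:ℕ) / 2 ^ i0 = (st.2.2:ℕ) / 2 ^ i0)),
      (((st.1.1, st.2.1), (st.1.2, st.2.2)) :
        (Fin (2^n) × Fin (2^n)) × (Fin (2^n) × Fin (2^n))) ∈ FU ×ˢ FV := by
    intro st hst
    rw [Finset.mem_filter] at hst
    rw [Finset.mem_product, hFU, hFV, Finset.mem_filter, Finset.mem_filter]
    exact ⟨⟨Finset.mem_univ _, hst.2.1⟩, ⟨Finset.mem_univ _, hst.2.2⟩⟩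
  have hcard := Finset.card_le_card_of_injOn _ hmap ?_
  · calc _ ≤ (FU ×ˢ FV).card := hcard
      _ = FU.card * FV.card := Finset.card_product _ _
      _ ≤ 2 ^ (n + k) * 2 ^ (n + i0) :=
        Nat.mul_le_mul (card_samediv n k hk) (card_samediv n i0 hi0)
  · intro a _ b _ hab
    rw [Prod.mk.injEq, Prod.mk.injEq, Prod.mk.injEq] at hab
    obtain ⟨⟨h1, h2⟩, h3, h4⟩ := hab
    exact Prod.ext (Prod.ext h1 h3) (Prod.ext h2 h4)

open Classical in
lemma card_pairs_ge (n m : ℕ) (hm1 : 1 ≤ m) :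
    ((Finset.univ : Finset (SP n)).filter fun st =>
        m ≤ ((tset n st.1.1 st.1.2) ∩ (tset n st.2.1 st.2.2)).card).card
      ≤ (n + 1) * (2 ^ (2 * n) * 2 ^ (n + 1 - m)) := by
  classical
  have hsub : ((Finset.univ : Finset (SP n)).filter fun st =>
        m ≤ ((tset n st.1.1 st.1.2) ∩ (tset n st.2.1 st.2.2)).card)
      ⊆ (Finset.range (n + 2 - m)).biUnion fun i0 =>
        (Finset.univ : Finset (SP n)).filter fun st =>
          ((st.1.1:ℕ) / 2 ^ (n + 1 - m - i0) = (st.2.1:ℕ) / 2 ^ (n + 1 - m - i0) ∧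
           (st.1.2:ℕ) / 2 ^ i0 = (st.2.2:ℕ) / 2 ^ i0) := by
    intro st hst
    rw [Finset.mem_filter] at hst
    have hgood : m ≤ (good n st.1.1 st.1.2 st.2.1 st.2.2).card :=
      le_trans hst.2 (card_inter_le_card_good n _ _ _ _)
    obtain ⟨i0, hi0, hu, hv⟩ := exists_window hm1 hgood
    rw [Finset.mem_biUnion]
    exact ⟨i0, Finset.mem_range.2 (by omega), Finset.mem_filter.2 ⟨Finset.mem_univ _, hu, hv⟩⟩
  calc _ ≤ _ := Finset.card_le_card hsub
    _ ≤ ∑ i0 ∈ Finset.range (n + 2 - m), ((Finset.univ : Finset (SP n)).filter fun st =>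
          ((st.1.1:ℕ) / 2 ^ (n + 1 - m - i0) = (st.2.1:ℕ) / 2 ^ (n + 1 - m - i0) ∧
           (st.1.2:ℕ) / 2 ^ i0 = (st.2.2:ℕ) / 2 ^ i0)).card := Finset.card_biUnion_le
    _ ≤ ∑ i0 ∈ Finset.range (n + 2 - m), 2 ^ (2 * n) * 2 ^ (n + 1 - m) := by
        refine Finset.sum_le_sum fun i0 hi0 => ?_
        rw [Finset.mem_range] at hi0
        rcases Nat.lt_or_ge m (n + 2) with hmn | hmn
        · have hb := card_pairs_event n i0 (n + 1 - m - i0) (by omega) (by omega)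
          refine le_trans hb (le_of_eq ?_)
          rw [← pow_add, ← pow_add]
          congr 1
          omega
        · omega
    _ = (n + 2 - m) * (2 ^ (2 * n) * 2 ^ (n + 1 - m)) := by
        rw [Finset.sum_const, Finset.card_range, smul_eq_mul]
    _ ≤ (n + 1) * (2 ^ (2 * n) * 2 ^ (n + 1 - m)) :=
        Nat.mul_le_mul_right _ (by omega)


/-- abbreviation for the weight of a configuration -/
def wt (n : ℕ) (p : ℝ) (S : Finset (TileIndex n)) : ℝ :=
  p ^ S.card * (1 - p) ^ ((n + 1) * 2 ^ n - S.card)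

lemma Pr_def' {n : ℕ} {p : ℝ} (E : Finset (TileIndex n) → Prop) [DecidablePred E] :
    Pr n p E = ∑ S : Finset (TileIndex n), if E S then wt n p S else 0 := by
  rw [Pr]
  exact Finset.sum_congr rfl fun S _ => by by_cases h : E S <;> simp [h, wt]

lemma wt_nonneg {n : ℕ} {p : ℝ} (hp0 : 0 ≤ p) (hp1 : p ≤ 1) (S : Finset (TileIndex n)) :
    0 ≤ wt n p S := weight_nonneg hp0 hp1 S

lemma sum_disj {n : ℕ} {p : ℝ} (hp0 : 0 ≤ p) (hp1 : p ≤ 1) (B : Finset (TileIndex n)) :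
    (∑ S : Finset (TileIndex n), if Disjoint B S then wt n p S else 0) = (1 - p) ^ B.card := by
  classical
  rw [← Pr_def']
  exact Pr_disjoint hp0 hp1 B

/-- crude pointwise window bound -/
lemma pow_window {q : ℝ} (hq0 : 0 ≤ q) {n c : ℕ} (hc : c ≤ n + 1) :
    q ^ (2 * n + 2 - c) ≤ q ^ (2 * n + 2) +
      ∑ m ∈ Finset.Icc 1 (n + 1), (if m ≤ c then q ^ (2 * n + 2 - m) else 0) := by
  classical
  have hnonneg : ∀ m ∈ Finset.Icc 1 (n+1), (0:ℝ) ≤ (if m ≤ c then q ^ (2 * n + 2 - m) else 0) := by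
    intro m _
    split
    · positivity
    · exact le_refl 0
  rcases Nat.eq_zero_or_pos c with hc0 | hc1
  · subst hc0
    simp only [Nat.sub_zero]
    exact le_add_of_nonneg_right (Finset.sum_nonneg hnonneg)
  · have hmem : c ∈ Finset.Icc 1 (n+1) := Finset.mem_Icc.2 ⟨hc1, hc⟩
    have hsingle : q ^ (2 * n + 2 - c) ≤
        ∑ m ∈ Finset.Icc 1 (n + 1), (if m ≤ c then q ^ (2 * n + 2 - m) else 0) := by
      have := Finset.single_le_sum hnonneg hmem
      simpa using this
    have : (0:ℝ) ≤ q ^ (2*n+2) := by positivity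
    linarith

lemma t_pow_le {t : ℝ} (ht : 0 < t) {m n : ℕ} (hm1 : 1 ≤ m) (hm2 : m ≤ n + 1) :
    t ^ m ≤ t + t ^ (n + 1) := by
  rcases le_or_gt t 1 with h | h
  · have h1 : t ^ m ≤ t ^ 1 := pow_le_pow_of_le_one ht.le h hm1
    rw [pow_one] at h1
    exact h1.trans (le_add_of_nonneg_right (pow_nonneg ht.le _))
  · have h1 : t ^ m ≤ t ^ (n + 1) := pow_le_pow_right₀ h.le hm2
    exact h1.trans (le_add_of_nonneg_left ht.le)

/-- Cauchy–Schwarz / Paley–Zygmund style bound -/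
lemma cs_bound {ι : Type*} [Fintype ι] (w X : ι → ℝ) (hw : ∀ i, 0 ≤ w i) :
    (∑ i, w i * X i) ^ 2 ≤
      (∑ i, if X i ≠ 0 then w i else 0) * (∑ i, w i * X i ^ 2) := by
  classical
  have h := Finset.sum_mul_sq_le_sq_mul_sq Finset.univ
    (fun i => if X i = 0 then 0 else Real.sqrt (w i))
    (fun i => Real.sqrt (w i) * X i)
  have h1 : ∀ i, (if X i = 0 then (0:ℝ) else Real.sqrt (w i)) * (Real.sqrt (w i) * X i)
      = w i * X i := by
    intro i
    by_cases hx : X i = 0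
    · simp [hx]
    · rw [if_neg hx, ← mul_assoc, Real.mul_self_sqrt (hw i)]
  have h2 : ∀ i, (if X i = 0 then (0:ℝ) else Real.sqrt (w i)) ^ 2
      = (if X i ≠ 0 then w i else 0) := by
    intro i
    by_cases hx : X i = 0
    · simp [hx]
    · rw [if_neg hx, if_pos hx, Real.sq_sqrt (hw i)]
  have h3 : ∀ i, (Real.sqrt (w i) * X i) ^ 2 = w i * X i ^ 2 := by
    intro i
    rw [mul_pow, Real.sq_sqrt (hw i)]
  calc (∑ i, w i * X i) ^ 2
      = (∑ i, (if X i = 0 then (0:ℝ) else Real.sqrt (w i)) * (Real.sqrt (w i) * X i)) ^ 2 := by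
        rw [Finset.sum_congr rfl fun i _ => (h1 i).symm]
    _ ≤ (∑ i, (if X i = 0 then (0:ℝ) else Real.sqrt (w i)) ^ 2)
        * (∑ i, (Real.sqrt (w i) * X i) ^ 2) := h
    _ = _ := by
        rw [Finset.sum_congr rfl fun i _ => h2 i, Finset.sum_congr rfl fun i _ => h3 i]

/-- `(n+1)^2 r^n → 0` -/
lemma aux_tendsto {r : ℝ} (hr0 : 0 < r) (hr1 : r < 1) :
    Tendsto (fun n : ℕ => ((n : ℝ) + 1) ^ 2 * r ^ n) atTop (𝓝 0) := by
  have h := (tendsto_pow_const_mul_const_pow_of_lt_one 2 hr0.le hr1).comp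
    (tendsto_add_atTop_nat 1)
  have h2 := h.mul_const r⁻¹
  rw [zero_mul] at h2
  refine h2.congr fun n => ?_
  simp only [Function.comp_apply]
  push_cast
  rw [pow_succ]
  field_simp
  ring


section mainest

variable {p : ℝ}

/-- the indicator that the tiles around square `s` are all missing -/
def indU (n : ℕ) (p : ℝ) : Prop := True

open Classical in
/-- first moment -/
lemma EX_eq (n : ℕ) (hp0 : 0 ≤ p) (hp1 : p ≤ 1) :
    ∑ S : Finset (TileIndex n), wt n p S *
        (∑ s : Fin (2^n) × Fin (2^n), if Disjoint (tset n s.1 s.2) S then (1:ℝ) else 0)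
      = ((2:ℝ)^n)^2 * (1-p)^(n+1) := by
  classical
  have hswap : ∑ S : Finset (TileIndex n), wt n p S *
        (∑ s : Fin (2^n) × Fin (2^n), if Disjoint (tset n s.1 s.2) S then (1:ℝ) else 0)
      = ∑ s : Fin (2^n) × Fin (2^n), ∑ S : Finset (TileIndex n),
          (if Disjoint (tset n s.1 s.2) S then wt n p S else 0) := by
    rw [show ∑ S : Finset (TileIndex n), wt n p S *
        (∑ s : Fin (2^n) × Fin (2^n), if Disjoint (tset n s.1 s.2) S then (1:ℝ) else 0)
      = ∑ S : Finset (TileIndex n), ∑ s : Fin (2^n) × Fin (2^n),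
          (if Disjoint (tset n s.1 s.2) S then wt n p S else 0) from
      Finset.sum_congr rfl fun S _ => by
        rw [Finset.mul_sum]
        exact Finset.sum_congr rfl fun s _ => by
          by_cases h : Disjoint (tset n s.1 s.2) S <;> simp [h]]
    exact Finset.sum_comm
  rw [hswap]
  have hper : ∀ s : Fin (2^n) × Fin (2^n),
      (∑ S : Finset (TileIndex n), if Disjoint (tset n s.1 s.2) S then wt n p S else 0)
        = (1-p)^(n+1) := by
    intro s
    rw [sum_disj hp0 hp1, card_tset]
  rw [Finset.sum_congr rfl fun s _ => hper s, Finset.sum_const, Finset.card_univ]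
  simp only [Fintype.card_prod, Fintype.card_fin, nsmul_eq_mul]
  push_cast
  ring

open Classical in
/-- second moment bound -/
lemma EX2_le (n : ℕ) (hp0 : 0 ≤ p) (hp1 : p ≤ 1) :
    ∑ S : Finset (TileIndex n), wt n p S *
        (∑ s : Fin (2^n) × Fin (2^n), if Disjoint (tset n s.1 s.2) S then (1:ℝ) else 0) ^ 2
      ≤ (((2:ℝ)^n)^2 * (1-p)^(n+1))^2 +
        ∑ m ∈ Finset.Icc 1 (n+1), (1-p)^(2*n+2-m) *
          (((n:ℝ)+1) * ((2:ℝ)^(2*n) * 2^(n+1-m))) := by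
  classical
  have hq0 : (0:ℝ) ≤ 1 - p := by linarith
  -- expand the square as a sum over pairs
  have hsq : ∀ S : Finset (TileIndex n),
      (∑ s : Fin (2^n) × Fin (2^n), if Disjoint (tset n s.1 s.2) S then (1:ℝ) else 0) ^ 2
      = ∑ st : SP n, (if Disjoint (tset n st.1.1 st.1.2 ∪ tset n st.2.1 st.2.2) S
          then (1:ℝ) else 0) := by
    intro S
    rw [sq, Finset.sum_mul_sum Finset.univ Finset.univ
      (fun s : Fin (2^n) × Fin (2^n) => if Disjoint (tset n s.1 s.2) S then (1:ℝ) else 0)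
      (fun t : Fin (2^n) × Fin (2^n) => if Disjoint (tset n t.1 t.2) S then (1:ℝ) else 0)]
    rw [show (∑ st : SP n, (if Disjoint (tset n st.1.1 st.1.2 ∪ tset n st.2.1 st.2.2) S
        then (1:ℝ) else 0))
      = ∑ s : Fin (2^n) × Fin (2^n), ∑ t : Fin (2^n) × Fin (2^n),
          (if Disjoint (tset n s.1 s.2 ∪ tset n t.1 t.2) S then (1:ℝ) else 0) from
      Fintype.sum_prod_type _]
    refine Finset.sum_congr rfl fun s _ => Finset.sum_congr rfl fun t _ => ?_
    by_cases h1 : Disjoint (tset n s.1 s.2) S <;>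
      by_cases h2 : Disjoint (tset n t.1 t.2) S <;>
        simp [h1, h2, Finset.disjoint_union_left]
  -- swap sums
  have hswap : ∑ S : Finset (TileIndex n), wt n p S *
        (∑ s : Fin (2^n) × Fin (2^n), if Disjoint (tset n s.1 s.2) S then (1:ℝ) else 0) ^ 2
      = ∑ st : SP n, ∑ S : Finset (TileIndex n),
          (if Disjoint (tset n st.1.1 st.1.2 ∪ tset n st.2.1 st.2.2) S then wt n p S else 0) := by
    rw [show ∑ S : Finset (TileIndex n), wt n p S *
        (∑ s : Fin (2^n) × Fin (2^n), if Disjoint (tset n s.1 s.2) S then (1:ℝ) else 0) ^ 2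
      = ∑ S : Finset (TileIndex n), ∑ st : SP n,
          (if Disjoint (tset n st.1.1 st.1.2 ∪ tset n st.2.1 st.2.2) S then wt n p S else 0) from
      Finset.sum_congr rfl fun S _ => by
        rw [hsq S, Finset.mul_sum]
        exact Finset.sum_congr rfl fun st _ => by
          by_cases h : Disjoint (tset n st.1.1 st.1.2 ∪ tset n st.2.1 st.2.2) S <;> simp [h]]
    exact Finset.sum_comm
  rw [hswap]
  -- evaluate the inner sums
  have hval : ∀ st : SP n, ∑ S : Finset (TileIndex n),
      (if Disjoint (tset n st.1.1 st.1.2 ∪ tset n st.2.1 st.2.2) S then wt n p S else 0)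
      = (1-p) ^ ((tset n st.1.1 st.1.2 ∪ tset n st.2.1 st.2.2).card) := fun st =>
    sum_disj hp0 hp1 _
  rw [Finset.sum_congr rfl fun st _ => hval st]
  -- card of union
  have hcard : ∀ st : SP n,
      (tset n st.1.1 st.1.2 ∪ tset n st.2.1 st.2.2).card
        = 2*n+2 - (tset n st.1.1 st.1.2 ∩ tset n st.2.1 st.2.2).card ∧
      (tset n st.1.1 st.1.2 ∩ tset n st.2.1 st.2.2).card ≤ n+1 := by
    intro st
    have h1 := Finset.card_union_add_card_inter (tset n st.1.1 st.1.2) (tset n st.2.1 st.2.2)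
    have h2 := Finset.card_le_card (Finset.inter_subset_left
      (s₁ := tset n st.1.1 st.1.2) (s₂ := tset n st.2.1 st.2.2))
    rw [card_tset] at h2
    rw [card_tset, card_tset] at h1
    constructor
    · omega
    · exact h2
  -- pointwise window bound and sum
  have hpt : ∀ st : SP n,
      (1-p) ^ ((tset n st.1.1 st.1.2 ∪ tset n st.2.1 st.2.2).card)
      ≤ (1-p)^(2*n+2) + ∑ m ∈ Finset.Icc 1 (n+1),
          (if m ≤ (tset n st.1.1 st.1.2 ∩ tset n st.2.1 st.2.2).card
            then (1-p)^(2*n+2-m) else 0) := by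
    intro st
    rw [(hcard st).1]
    exact pow_window hq0 (hcard st).2
  calc ∑ st : SP n, (1-p) ^ ((tset n st.1.1 st.1.2 ∪ tset n st.2.1 st.2.2).card)
      ≤ ∑ st : SP n, ((1-p)^(2*n+2) + ∑ m ∈ Finset.Icc 1 (n+1),
          (if m ≤ (tset n st.1.1 st.1.2 ∩ tset n st.2.1 st.2.2).card
            then (1-p)^(2*n+2-m) else 0)) := Finset.sum_le_sum fun st _ => hpt st
    _ = (Fintype.card (SP n) : ℝ) * (1-p)^(2*n+2) +
        ∑ m ∈ Finset.Icc 1 (n+1), ∑ st : SP n,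
          (if m ≤ (tset n st.1.1 st.1.2 ∩ tset n st.2.1 st.2.2).card
            then (1-p)^(2*n+2-m) else 0) := by
        rw [Finset.sum_add_distrib, Finset.sum_const, Finset.card_univ, nsmul_eq_mul,
          Finset.sum_comm]
    _ ≤ (((2:ℝ)^n)^2 * (1-p)^(n+1))^2 +
        ∑ m ∈ Finset.Icc 1 (n+1), (1-p)^(2*n+2-m) *
          (((n:ℝ)+1) * ((2:ℝ)^(2*n) * 2^(n+1-m))) := by
        gcongr with m hm
        · -- first term
          apply le_of_eq
          have : (Fintype.card (SP n) : ℝ) = ((2:ℝ)^n)^2 * ((2:ℝ)^n)^2 := by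
            simp only [SP, Fintype.card_prod, Fintype.card_fin]
            push_cast
            ring
          rw [this, mul_pow, ← pow_mul, ← pow_mul, ← pow_add]
          ring_nf
        · -- per-m term
          rw [Finset.mem_Icc] at hm
          have hsum : ∑ st : SP n,
              (if m ≤ (tset n st.1.1 st.1.2 ∩ tset n st.2.1 st.2.2).card
                then (1-p)^(2*n+2-m) else 0)
              = (((Finset.univ : Finset (SP n)).filter fun st =>
                  m ≤ (tset n st.1.1 st.1.2 ∩ tset n st.2.1 st.2.2).card).card : ℝ)
                * (1-p)^(2*n+2-m) := by
            rw [← Finset.sum_filter, Finset.sum_const, nsmul_eq_mul]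
          rw [hsum]
          rw [mul_comm ((1-p)^(2*n+2-m))]
          refine mul_le_mul_of_nonneg_right ?_ (by positivity)
          have hb := card_pairs_ge n m hm.1
          calc (((Finset.univ : Finset (SP n)).filter fun st =>
                  m ≤ (tset n st.1.1 st.1.2 ∩ tset n st.2.1 st.2.2).card).card : ℝ)
              ≤ (((n + 1) * (2 ^ (2 * n) * 2 ^ (n + 1 - m)) : ℕ) : ℝ) := by exact_mod_cast hb
            _ = ((n:ℝ)+1) * ((2:ℝ)^(2*n) * 2^(n+1-m)) := by push_cast; ring

/-- the error bound -/
def Bnd (n : ℕ) (p : ℝ) : ℝ :=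
  ((n:ℝ)+1)^2 * (2 * (1/2)^n) * ((2*(1-p))⁻¹ + ((2*(1-p))⁻¹)^(n+1))

lemma R_le (n : ℕ) (hq0 : 0 < 1 - p) :
    ∑ m ∈ Finset.Icc 1 (n+1), (1-p)^(2*n+2-m) *
        (((n:ℝ)+1) * ((2:ℝ)^(2*n) * 2^(n+1-m)))
      ≤ Bnd n p * (((2:ℝ)^n)^2 * (1-p)^(n+1))^2 := by
  have h2 : (0:ℝ) < 2 := by norm_num
  set q : ℝ := 1 - p with hqdef
  have hqne : q ≠ 0 := ne_of_gt hq0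
  set t : ℝ := (2*q)⁻¹ with htdef
  have ht0 : 0 < t := by positivity
  have key : ∀ m ∈ Finset.Icc 1 (n+1),
      q^(2*n+2-m) * (((n:ℝ)+1) * ((2:ℝ)^(2*n) * 2^(n+1-m)))
      ≤ (((n:ℝ)+1) * (2 * (1/2)^n) * (t + t^(n+1))) * (((2:ℝ)^n)^2 * q^(n+1))^2 := by
    intro m hm
    rw [Finset.mem_Icc] at hm
    have e1 : q^(2*n+2-m) = q^(2*n+2) * (q^m)⁻¹ := pow_sub₀ q hqne (by omega)
    have e2 : (2:ℝ)^(n+1-m) = 2^(n+1) * ((2:ℝ)^m)⁻¹ := pow_sub₀ 2 (by norm_num) (by omega)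
    have e3 : t^m = ((2:ℝ)^m)⁻¹ * (q^m)⁻¹ := by
      rw [htdef, inv_pow, mul_pow, mul_inv]
    have htm : t^m ≤ t + t^(n+1) := t_pow_le ht0 hm.1 hm.2
    have hC : (0:ℝ) ≤ ((n:ℝ)+1) * (2:ℝ)^(2*n) * 2^(n+1) * q^(2*n+2) := by positivity
    calc q^(2*n+2-m) * (((n:ℝ)+1) * ((2:ℝ)^(2*n) * 2^(n+1-m)))
        = (((n:ℝ)+1) * (2:ℝ)^(2*n) * 2^(n+1) * q^(2*n+2)) * t^m := by
          rw [e1, e2, e3]; ring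
      _ ≤ (((n:ℝ)+1) * (2:ℝ)^(2*n) * 2^(n+1) * q^(2*n+2)) * (t + t^(n+1)) :=
          mul_le_mul_of_nonneg_left htm hC
      _ = (((n:ℝ)+1) * (2 * (1/2)^n) * (t + t^(n+1))) * (((2:ℝ)^n)^2 * q^(n+1))^2 := by
          have h12 : ((1:ℝ)/2)^n = ((2:ℝ)^n)⁻¹ := by
            rw [one_div, inv_pow]
          rw [h12]
          have hne : ((2:ℝ)^n) ≠ 0 := by positivity
          field_simp
          ring
  calc ∑ m ∈ Finset.Icc 1 (n+1), q^(2*n+2-m) * (((n:ℝ)+1) * ((2:ℝ)^(2*n) * 2^(n+1-m)))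
      ≤ ∑ m ∈ Finset.Icc 1 (n+1),
          (((n:ℝ)+1) * (2 * (1/2)^n) * (t + t^(n+1))) * (((2:ℝ)^n)^2 * q^(n+1))^2 :=
        Finset.sum_le_sum key
    _ = ((n:ℝ)+1) * ((((n:ℝ)+1) * (2 * (1/2)^n) * (t + t^(n+1))) * (((2:ℝ)^n)^2 * q^(n+1))^2) := by
        rw [Finset.sum_const, Nat.card_Icc, nsmul_eq_mul]
        push_cast
        ring
    _ = Bnd n p * (((2:ℝ)^n)^2 * q^(n+1))^2 := by
        rw [Bnd]
        ring

open Classical in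
lemma EX2_pos (n : ℕ) (hp0 : 0 ≤ p) (hp1 : p < 1) :
    0 < ∑ S : Finset (TileIndex n), wt n p S *
        (∑ s : Fin (2^n) × Fin (2^n), if Disjoint (tset n s.1 s.2) S then (1:ℝ) else 0) ^ 2 := by
  classical
  have hq0 : (0:ℝ) < 1 - p := by linarith
  have hterm : ∀ S : Finset (TileIndex n), 0 ≤ wt n p S *
      (∑ s : Fin (2^n) × Fin (2^n), if Disjoint (tset n s.1 s.2) S then (1:ℝ) else 0) ^ 2 :=
    fun S => mul_nonneg (wt_nonneg hp0 hp1.le S) (sq_nonneg _)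
  have hsingle := Finset.single_le_sum (f := fun S : Finset (TileIndex n) => wt n p S *
      (∑ s : Fin (2^n) × Fin (2^n), if Disjoint (tset n s.1 s.2) S then (1:ℝ) else 0) ^ 2)
    (fun S _ => hterm S) (Finset.mem_univ (∅ : Finset (TileIndex n)))
  refine lt_of_lt_of_le ?_ hsingle
  have h1 : wt n p (∅ : Finset (TileIndex n)) = (1-p) ^ ((n+1) * 2^n) := by
    rw [wt]; simp
  have h2 : (∑ s : Fin (2^n) × Fin (2^n),
      if Disjoint (tset n s.1 s.2) (∅ : Finset (TileIndex n)) then (1:ℝ) else 0)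
      = ((2^n * 2^n : ℕ) : ℝ) := by
    rw [Finset.sum_congr rfl fun s _ => if_pos (Finset.disjoint_empty_right _)]
    rw [Finset.sum_const, Finset.card_univ, nsmul_eq_mul, mul_one]
    simp
  simp only [h1, h2]
  positivity

open Classical in
lemma Pprime_le (n : ℕ) (hp0 : 0 ≤ p) (hp1 : p ≤ 1) :
    (∑ S : Finset (TileIndex n),
        if (∑ s : Fin (2^n) × Fin (2^n),
            if Disjoint (tset n s.1 s.2) S then (1:ℝ) else 0) ≠ 0 then wt n p S else 0)
      ≤ Pr n p (UncoveredExists n) := by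
  classical
  rw [Pr_def' (UncoveredExists n)]
  refine Finset.sum_le_sum fun S _ => ?_
  by_cases hx : (∑ s : Fin (2^n) × Fin (2^n),
      if Disjoint (tset n s.1 s.2) S then (1:ℝ) else 0) ≠ 0
  · rw [if_pos hx]
    -- find a square whose tiles are all missing
    have hex : ∃ s : Fin (2^n) × Fin (2^n), Disjoint (tset n s.1 s.2) S := by
      by_contra hall
      push_neg at hall
      exact hx (Finset.sum_eq_zero fun s _ => if_neg (hall s))
    obtain ⟨s, hdisj⟩ := hex
    have hunc : UncoveredExists n S := by
      refine ⟨ctr n s.1 s.2, ctr_mem_unitSquare n s.1 s.2, fun i hi hmem => ?_⟩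
      exact (Finset.disjoint_left.1 hdisj (mem_tset_of_ctr_mem hmem)) hi
    rw [if_pos hunc]
  · rw [if_neg hx]
    split
    · exact wt_nonneg hp0 hp1 S
    · exact le_refl 0

open Classical in
/-- the central estimate -/
lemma pr_uncovered_ge (n : ℕ) (hp0 : 0 ≤ p) (hp : p < 3/4) :
    1 - Bnd n p ≤ Pr n p (UncoveredExists n) := by
  classical
  have hp1 : p ≤ 1 := by linarith
  have hq0 : (0:ℝ) < 1 - p := by linarith
  set X : Finset (TileIndex n) → ℝ := fun S =>
    ∑ s : Fin (2^n) × Fin (2^n), if Disjoint (tset n s.1 s.2) S then (1:ℝ) else 0 with hXdef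
  set e : ℝ := ((2:ℝ)^n)^2 * (1-p)^(n+1) with hedef
  have he0 : 0 < e := by rw [hedef]; positivity
  set D : ℝ := ∑ S : Finset (TileIndex n), wt n p S * X S ^ 2 with hDdef
  have hD0 : 0 < D := EX2_pos n hp0 (by linarith)
  set R : ℝ := ∑ m ∈ Finset.Icc 1 (n+1), (1-p)^(2*n+2-m) *
      (((n:ℝ)+1) * ((2:ℝ)^(2*n) * 2^(n+1-m))) with hRdef
  have hR0 : 0 ≤ R := by
    rw [hRdef]
    refine Finset.sum_nonneg fun m _ => ?_
    positivity
  have hEX : ∑ S : Finset (TileIndex n), wt n p S * X S = e := EX_eq n hp0 hp1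
  have hD_le : D ≤ e^2 + R := by
    rw [hDdef, hedef, hRdef]
    exact EX2_le n hp0 hp1
  have hCS : e^2 ≤ (∑ S : Finset (TileIndex n), if X S ≠ 0 then wt n p S else 0) * D := by
    rw [← hEX, hDdef]
    exact cs_bound (wt n p) X (wt_nonneg hp0 hp1)
  have hP' : (∑ S : Finset (TileIndex n), if X S ≠ 0 then wt n p S else 0)
      ≤ Pr n p (UncoveredExists n) := Pprime_le n hp0 hp1
  have hRB : R ≤ Bnd n p * e^2 := by
    rw [hRdef, hedef]
    exact R_le n hq0
  -- combine
  have step1 : e^2 / D ≤ Pr n p (UncoveredExists n) :=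
    le_trans (by rw [div_le_iff₀ hD0]; linarith [hCS]) hP'
  have step2 : 1 - Bnd n p ≤ e^2 / D := by
    rw [le_div_iff₀ hD0]
    have he2 : 0 < e^2 := by positivity
    rcases le_or_gt (Bnd n p) 1 with hB | hB
    · have h1B : (0:ℝ) ≤ 1 - Bnd n p := by linarith
      nlinarith [mul_le_mul_of_nonneg_left hD_le h1B, mul_le_mul_of_nonneg_left hRB h1B,
        mul_nonneg (sq_nonneg (Bnd n p)) he2.le]
    · have : (1 - Bnd n p) * D ≤ 0 :=
        mul_nonpos_of_nonpos_of_nonneg (by linarith) hD0.le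
      linarith
  linarith

lemma Bnd_tendsto (hp0 : 0 ≤ p) (hp : p < 3/4) :
    Tendsto (fun n => Bnd n p) atTop (𝓝 0) := by
  have hq0 : (0:ℝ) < 1 - p := by linarith
  set t : ℝ := (2*(1-p))⁻¹ with htdef
  have ht0 : 0 < t := by positivity
  have ht2 : t < 2 := by
    rw [htdef]
    rw [inv_lt_comm₀ (by linarith) (by norm_num)]
    linarith
  have h12 : Tendsto (fun n : ℕ => ((n:ℝ)+1)^2 * (1/2)^n) atTop (𝓝 0) :=
    aux_tendsto (by norm_num) (by norm_num)
  have ht2' : Tendsto (fun n : ℕ => ((n:ℝ)+1)^2 * (t/2)^n) atTop (𝓝 0) :=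
    aux_tendsto (by positivity) (by linarith)
  have hsum : Tendsto (fun n : ℕ => 2*t * (((n:ℝ)+1)^2 * (1/2)^n)
      + 2*t * (((n:ℝ)+1)^2 * (t/2)^n)) atTop (𝓝 (2*t*0 + 2*t*0)) :=
    (h12.const_mul (2*t)).add (ht2'.const_mul (2*t))
  rw [show (2*t*0 + 2*t*0 : ℝ) = 0 by ring] at hsum
  refine hsum.congr fun n => ?_
  show 2*t * (((n:ℝ)+1)^2 * (1/2)^n) + 2*t * (((n:ℝ)+1)^2 * (t/2)^n) = Bnd n p
  rw [Bnd, ← htdef, div_pow, div_pow, one_pow]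
  have hne : ((2:ℝ)^n) ≠ 0 := by positivity
  field_simp
  ring

lemma uncovered_tendsto (hp0 : 0 ≤ p) (hp : p < 3/4) :
    Tendsto (fun n => Pr n p (UncoveredExists n)) atTop (𝓝 1) := by
  have hp1 : p ≤ 1 := by linarith
  have hlow : Tendsto (fun n => 1 - Bnd n p) atTop (𝓝 1) := by
    have := (Bnd_tendsto hp0 hp).const_sub 1
    simpa using this
  exact tendsto_of_tendsto_of_tendsto_of_le_of_le hlow tendsto_const_nhds
    (fun n => pr_uncovered_ge n hp0 hp) (fun n => Pr_le_one hp0 hp1 _)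

lemma T_tendsto_zero (hp0 : 0 ≤ p) (hp : p < 3/4) :
    Tendsto (fun n => T n p) atTop (𝓝 0) := by
  have hp1 : p ≤ 1 := by linarith
  have himp : ∀ n (S : Finset (TileIndex n)), TileableSquare n S → ¬ UncoveredExists n S := by
    rintro n S ⟨F, hF, hdyadic, hunion, hpair⟩ ⟨x, hx, hunc⟩
    rw [← hunion] at hx
    obtain ⟨tl, htlF, hxtl⟩ := hx
    obtain ⟨i, hiS, rfl⟩ := hF tl htlF
    exact hunc i hiS hxtl
  have hTle : ∀ n, T n p ≤ 1 - Pr n p (UncoveredExists n) := by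
    intro n
    have h1 : T n p ≤ Pr n p (fun S => ¬ UncoveredExists n S) :=
      Pr_mono hp0 hp1 (himp n)
    have h2 := Pr_add_compl hp0 hp1 (UncoveredExists n)
    linarith
  have hupper : Tendsto (fun n => 1 - Pr n p (UncoveredExists n)) atTop (𝓝 0) := by
    have := (uncovered_tendsto hp0 hp).const_sub 1
    simpa using this
  exact tendsto_of_tendsto_of_tendsto_of_le_of_le tendsto_const_nhds hupper
    (fun n => Pr_nonneg hp0 hp1 _) hTle

/-- the index of the horizontal slab `b` (shape `i = 0`) -/
def slab (n : ℕ) (b : Fin (2^n)) : TileIndex n :=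
  ⟨⟨0, Nat.succ_pos n⟩, ⟨0, by norm_num⟩, b⟩

lemma tileOf_slab (n : ℕ) (b : Fin (2^n)) :
    tileOf n (slab n b) = dyadicTile 0 n 0 (b : ℕ) := rfl

lemma tileable_univ (n : ℕ) : TileableSquare n (Finset.univ : Finset (TileIndex n)) := by
  classical
  refine ⟨Set.range (fun b : Fin (2^n) => tileOf n (slab n b)), ?_, ?_, ?_, ?_⟩
  · rintro tl ⟨b, rfl⟩
    exact ⟨slab n b, Finset.mem_univ _, rfl⟩
  · rintro tl ⟨b, rfl⟩
    exact ⟨0, n, 0, (b:ℕ), by norm_num, by norm_num, b.2, tileOf_slab n b⟩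
  · -- union
    apply Set.eq_of_subset_of_subset
    · rintro x ⟨tl, ⟨b, rfl⟩, hx⟩
      simp only [tileOf_slab] at hx
      obtain ⟨⟨h1, h2⟩, h3, h4⟩ := hx
      have hb1 : (0:ℝ) ≤ (b:ℕ) := by positivity
      have hb2 : ((b:ℕ):ℝ) + 1 ≤ 2^n := by
        have := b.2
        have : ((b:ℕ):ℝ) + 1 ≤ ((2^n : ℕ):ℝ) := by exact_mod_cast this
        push_cast at this
        linarith
      have h2n : (0:ℝ) < 2^n := by positivity
      constructor
      · constructor
        · simpa using h1
        · simpa using h2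
      · constructor
        · refine le_trans ?_ h3
          positivity
        · refine le_trans h4 ?_
          rw [div_le_one h2n]
          push_cast
          linarith
    · rintro ⟨x1, x2⟩ ⟨hx1, hx2⟩
      have h2n : (0:ℝ) < 2^n := by positivity
      have h2n' : (1:ℕ) ≤ 2^n := Nat.one_le_two_pow
      set bn : ℕ := min ⌊x2 * 2^n⌋₊ (2^n - 1) with hbn
      have hblt : bn < 2^n := by
        have : bn ≤ 2^n - 1 := min_le_right _ _
        omega
      refine ⟨tileOf n (slab n ⟨bn, hblt⟩), ⟨⟨bn, hblt⟩, rfl⟩, ?_⟩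
      rw [tileOf_slab]
      have hx20 : 0 ≤ x2 := hx2.1
      have hx21 : x2 ≤ 1 := hx2.2
      refine ⟨⟨by simpa using hx1.1, by simpa using hx1.2⟩, ?_, ?_⟩
      · -- lower bound
        show ((bn:ℕ):ℝ) / 2^n ≤ x2
        rw [div_le_iff₀ h2n]
        have hble : bn ≤ ⌊x2 * 2^n⌋₊ := by rw [hbn]; exact min_le_left _ _
        calc ((bn:ℕ):ℝ) ≤ (⌊x2 * 2^n⌋₊ : ℝ) := by exact_mod_cast hble
          _ ≤ x2 * 2^n := Nat.floor_le (by positivity)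
      · -- upper bound
        show x2 ≤ (((bn:ℕ):ℝ) + 1) / 2^n
        rw [le_div_iff₀ h2n]
        rcases le_or_gt (⌊x2 * 2^n⌋₊) (2^n - 1) with hc | hc
        · rw [hbn, min_eq_left hc]
          have := Nat.lt_floor_add_one (x2 * 2^n)
          linarith
        · rw [hbn, min_eq_right (by omega : 2^n - 1 ≤ ⌊x2 * 2^n⌋₊)]
          have hval : ((2^n - 1 : ℕ):ℝ) + 1 = 2^n := by
            rw [Nat.cast_sub h2n']
            push_cast
            ring
          rw [hval]
          nlinarith
  · -- pairwise interior-disjoint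
    rintro s ⟨b, rfl⟩ tl ⟨b', rfl⟩ hne
    have hbb : (b:ℕ) ≠ (b':ℕ) := by
      intro h
      exact hne (by rw [show b = b' from Fin.val_injective h])
    simp only [tileOf_slab]
    rw [dyadicTile, dyadicTile]
    simp only [interior_prod_eq, interior_Icc]
    rw [Set.eq_empty_iff_forall_notMem]
    rintro ⟨x1, x2⟩ ⟨⟨-, hz1⟩, ⟨-, hz2⟩⟩
    have h2n : (0:ℝ) < 2^n := by positivity
    obtain ⟨ha1, ha2⟩ := hz1
    obtain ⟨hb1, hb2⟩ := hz2
    rcases Nat.lt_or_ge (b:ℕ) (b':ℕ) with hlt | hge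
    · have hcast : ((b:ℕ):ℝ) + 1 ≤ ((b':ℕ):ℝ) := by exact_mod_cast hlt
      have : (((b:ℕ):ℝ)+1)/2^n ≤ ((b':ℕ):ℝ)/2^n := by gcongr
      linarith
    · have hlt' : (b':ℕ) < (b:ℕ) := by omega
      have hcast : ((b':ℕ):ℝ) + 1 ≤ ((b:ℕ):ℝ) := by exact_mod_cast hlt'
      have : (((b':ℕ):ℝ)+1)/2^n ≤ ((b:ℕ):ℝ)/2^n := by gcongr
      linarith

open Classical in
lemma Pr_one (n : ℕ) (E : Finset (TileIndex n) → Prop) (hE : E Finset.univ) :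
    Pr n 1 E = 1 := by
  classical
  rw [Pr_def' E]
  rw [Finset.sum_eq_single Finset.univ]
  · rw [if_pos hE, wt]
    have hcard : (Finset.univ : Finset (TileIndex n)).card = (n+1) * 2^n := by
      rw [Finset.card_univ, card_tileIndex]
    rw [hcard]
    simp
  · intro S _ hS
    have hlt : S.card < (n+1) * 2^n := by
      have h1 : S.card < Fintype.card (TileIndex n) :=
        Finset.card_lt_card (Finset.ssubset_univ_iff.2 hS)
      rwa [card_tileIndex] at h1
    have hwt : wt n 1 S = 0 := by
      rw [wt]
      norm_num
      omega
    split <;> simp [hwt]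
  · intro h
    exact absurd (Finset.mem_univ _) h

lemma T_one (n : ℕ) : T n 1 = 1 := Pr_one n (TileableSquare n) (tileable_univ n)

end mainest

end aux

/-- for `0 ≤ p < 3/4`, the probability of an uncovered point tends to `1`,
consequently `T_n(p) → 0`; hence `p_c ≥ 3/4`. -/
theorem uncovered_points :
    (∀ p : ℝ, 0 ≤ p → p < 3 / 4 →
      Tendsto (fun n => Pr n p (UncoveredExists n)) atTop (𝓝 1) ∧
      Tendsto (fun n => T n p) atTop (𝓝 0)) ∧
    3 / 4 ≤ pc := by
  constructor
  · exact fun p hp0 hp => ⟨uncovered_tendsto hp0 hp, T_tendsto_zero hp0 hp⟩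
  · rw [pc]
    have hone : (1:ℝ) ∈ {p : ℝ | p ∈ Set.Icc (0:ℝ) 1 ∧ Tendsto (fun n => T n p) atTop (𝓝 1)} := by
      refine ⟨⟨zero_le_one, le_refl 1⟩, ?_⟩
      have : (fun n => T n 1) = fun _ => (1:ℝ) := funext fun n => T_one n
      rw [this]
      exact tendsto_const_nhds
    refine le_csInf ⟨1, hone⟩ ?_
    rintro q ⟨⟨hq0, hq1⟩, hqT⟩
    by_contra hlt
    push_neg at hlt
    have h0 := T_tendsto_zero hq0 hlt
    have := tendsto_nhds_unique hqT h0
    norm_num at this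

end
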